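/- Let P be a 2-torsion free ring and let d : P → P be a commuting Jordan derivation. Then for all p₁, p₂ ∈ P, d(p₁p₂p₁) = p₁² d(p₂) + 3·p₁p₂ d(p₁) − p₂p₁ d(p₁). -/
import Mathlib


/-- Let P be a 2-torsion free ring and d a commuting Jordan derivation. Then
d(p₁p₂p₁) = p₁² d(p₂) + 3·p₁p₂ d(p₁) − p₂p₁ d(p₁). -/
theorem commuting_jordan_derivation_triple_right {P : Type*} [Ring P]
    (htf : ∀ p : P, 2 • p = 0 → p = 0) (d : P → P)
    (hadd : ∀ x y : P, d (x + y) = d x + d y)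
    (hJ : ∀ p : P, d (p ^ 2) = d p * p + p * d p)
    (hC : ∀ p : P, d p * p = p * d p) :
    ∀ p₁ p₂ : P,
      d (p₁ * p₂ * p₁) = p₁ ^ 2 * d p₂ + 3 • (p₁ * p₂ * d p₁) - p₂ * p₁ * d p₁ := by
  -- linearized commuting identity
  have h2 : ∀ x y : P, d x * y + d y * x = x * d y + y * d x := by
    intro x y
    have h := hC (x + y)
    rw [hadd] at h
    linear_combination (norm := noncomm_ring) h - hC x - hC y
  -- linearized Jordan identity
  have h1 : ∀ x y : P, d (x * y + y * x) = d x * y + x * d y + d y * x + y * d x := by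
    intro x y
    have h := hJ (x + y)
    have e : (x + y) ^ 2 = x ^ 2 + (x * y + y * x) + y ^ 2 := by noncomm_ring
    rw [e] at h
    rw [hadd (x ^ 2 + (x * y + y * x)) (y ^ 2), hadd (x ^ 2) (x * y + y * x),
      hadd x y] at h
    linear_combination (norm := noncomm_ring) h - hJ x - hJ y
  intro a b
  -- d of the Jordan product u = ab + ba
  have hu : d (a * b + b * a) = d a * b + a * d b + d b * a + b * d a := h1 a b
  -- F1 : expand d(a∘u)
  have F1 := h1 a (a * b + b * a)
  have e : a * (a * b + b * a) + (a * b + b * a) * a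
      = (a ^ 2 * b + b * a ^ 2) + (a * b * a + a * b * a) := by noncomm_ring
  rw [e] at F1
  rw [hadd (a ^ 2 * b + b * a ^ 2) (a * b * a + a * b * a),
    hadd (a * b * a) (a * b * a), hu] at F1
  -- F2 : expand d(a²∘b)
  have F2 := h1 (a ^ 2) b
  rw [hJ a] at F2
  have lem1 : d (a * b * a) + d (a * b * a)
      = (d a * b * a + a * b * d a + a * d b * a)
        + (d a * b * a + a * b * d a + a * d b * a) := by
    linear_combination (norm := noncomm_ring) F1 - F2
  -- E3 : commuting identity applied to a and u, with d u expanded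
  have E3 := h2 a (a * b + b * a)
  rw [hu] at E3
  have lem2 : d a * b * a + a * b * d a + a * d b * a
      = a ^ 2 * d b + 3 • (a * b * d a) - b * a * d a := by
    linear_combination (norm := noncomm_ring)
      E3 - h2 a b * a - hC a * b - b * hC a - b * hC a
  have key : (2 : ℕ) • (d (a * b * a)
      - (a ^ 2 * d b + 3 • (a * b * d a) - b * a * d a)) = 0 := by
    rw [two_smul]
    linear_combination (norm := noncomm_ring) lem1 + lem2 + lem2
  exact sub_eq_zero.mp (htf _ key)
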